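/- For every integer r and every integer k ≥ 0, conjugating D_r by the plethystic multiplication operators P_{±z/M} yields (P_{−z/M} ∘ D_r ∘ P_{z/M})|_{z^k} = D_{k+r}; equivalently, P_{−z/M} ∘ D_r ∘ P_{z/M} = Σ_{k≥0} z^k D_{k+r} as formal power series in z with operator coefficients. -/

import Mathlib

/-!
Common setup for "A proof of the Theta Operator Conjecture" (Romero).

* `K = ℚ(q,t)` is realized as the fraction field of `ℚ[q,t]`.
* `Λ`, the ring of symmetric functions with coefficients in `ℚ(q,t)`, is realized as the
  polynomial ring on the power sums `p 1, p 2, …` (a presentation valid in characteristic 0).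
* The plethystic exponential `E[X] = ∑ hₙ[X] = exp (∑ p_k/k)` is encoded through the
  Newton-type recursion `n·Gₙ = ∑_{k=1}^{n} c_k G_{n-k}` for the coefficients of
  `exp (∑_{k ≥ 1} c_k z^k / k)`.
* Formal series in an auxiliary variable `z` (resp. a Laurent variable) with coefficients
  in `Λ` are elements of `PowerSeries Λ` (resp. `LaurentSeries Λ`), and operator identities
  involving generating functions are stated coefficientwise / as series identities,
  pointwise on `F : Λ`.
* The modified Macdonald basis `H̃_μ` (indexed by `YoungDiagram`) is axiomatized in the
  structure `MacdonaldBasis` via the Garsia–Haiman triangularity/normalization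
  characterization; all Macdonald eigenoperators (`Δ_f`, `∇`, `Π`, `Θ_k`, `Δ_v`) are then
  defined diagonally from it.
-/

noncomputable section

namespace ThetaOperators

open scoped Classical

/-- The base field `ℚ(q,t)`. -/
abbrev K : Type := FractionRing (MvPolynomial (Fin 2) ℚ)

/-- The parameter `q`. -/
def q : K := algebraMap (MvPolynomial (Fin 2) ℚ) K (MvPolynomial.X 0)

/-- The parameter `t`. -/
def t : K := algebraMap (MvPolynomial (Fin 2) ℚ) K (MvPolynomial.X 1)

/-- `M = (1-q)(1-t)`. -/
def M : K := (1 - q) * (1 - t)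

/-- The ring of symmetric functions with coefficients in `ℚ(q,t)`, presented as the
polynomial ring on the power sums. -/
abbrev Λ : Type := MvPolynomial ℕ+ K

/-- The power sum symmetric function `p_k`. -/
def p (k : ℕ+) : Λ := MvPolynomial.X k

/-- `genF c n` is the coefficient of `z^n` in `exp (∑_{k ≥ 1} c_k z^k / k)`,
via the Newton-type recursion `n·Gₙ = ∑_{k=1}^{n} c_k G_{n-k}`. -/
def genF (c : ℕ+ → Λ) : ℕ → Λ
  | 0 => 1
  | n + 1 =>
      (((n : K) + 1)⁻¹) •
        ∑ k ∈ Finset.range (n + 1), c ⟨k + 1, Nat.succ_pos k⟩ * genF c (n - k)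
  termination_by n => n
  decreasing_by simp_wf <;> omega

/-- The complete homogeneous symmetric function `h_n`: coefficient of `z^n`
in `E[zX] = exp (∑ p_k z^k / k)`. -/
def h (n : ℕ) : Λ := genF p n

/-- The elementary symmetric function `e_n`: `E[-zX] = ∑ (-z)^n e_n`. -/
def e (n : ℕ) : Λ := (-1) ^ n * genF (fun k => -p k) n

/-- Scalar version of `genF`: coefficient of `z^n` in `exp (∑_{k≥1} c_k z^k / k)` over `K`. -/
def genK (c : ℕ+ → K) : ℕ → K
  | 0 => 1
  | n + 1 =>
      ((n : K) + 1)⁻¹ *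
        ∑ k ∈ Finset.range (n + 1), c ⟨k + 1, Nat.succ_pos k⟩ * genK c (n - k)
  termination_by n => n
  decreasing_by simp_wf <;> omega

/-- `Eser ζ n` is the coefficient of `z^n` in `E[zWX]`, where `W` is the alphabet with
power sums `p_k[W] = ζ k`.  E.g. `Eser (fun _ => -1) n = (-1)^n eₙ[X]`, so that
`∑ z^n · Eser (fun _ => -1) n = E[-zX]`. -/
def Eser (ζ : ℕ+ → K) (n : ℕ) : Λ := genF (fun k => MvPolynomial.C (ζ k) * p k) n

/-- `p_k[M] = (1-q^k)(1-t^k)`. -/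
def Mk (k : ℕ+) : K := (1 - q ^ (k : ℕ)) * (1 - t ^ (k : ℕ))

/-- `p_k[X/M]`-twist: `1/((1-q^k)(1-t^k))`.  Thus `Eser invM n = h_n[X/M]` and
`∑ z^n Eser invM n = E[zX/M]`; similarly `∑ z^n Eser (fun j => -invM j) n = E[-zX/M]`. -/
def invM (k : ℕ+) : K := (Mk k)⁻¹

/-- Plethystic translation `T_Y : F[X] ↦ F[X+Y]` by an alphabet `Y` with power sums
`p_k[Y] = a k ∈ K`. -/
def Ttr (a : ℕ+ → K) : Λ →ₐ[K] Λ :=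
  MvPolynomial.aeval fun k => p k + MvPolynomial.C (a k)

/-- `f ↦ f* = f[X/M]`. -/
def star : Λ →ₐ[K] Λ :=
  MvPolynomial.aeval fun k => MvPolynomial.C (invM k) * p k

/-- `F ↦ F[X + M/z]`, as a Laurent series in `z` with coefficients in `Λ`
(the translation `T_{M/z}`). -/
def TMz : Λ →ₐ[K] LaurentSeries Λ :=
  MvPolynomial.aeval fun k =>
    HahnSeries.C (p k) + Mk k • HahnSeries.single (-((k : ℕ) : ℤ)) (1 : Λ)

/-- `E[-zX]` as a Laurent series in `z`. -/
def EnegL : LaurentSeries Λ :=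
  HahnSeries.ofPowerSeries ℤ Λ (PowerSeries.mk (Eser fun _ => -1))

/-- The Garsia–Haiman–Tesler operator `D_k`:
`D_k F = (F[X + M/z] · E[-zX]) |_{z^k}`. -/
def D (k : ℤ) (F : Λ) : Λ := ((TMz F) * EnegL).coeff k

/-- `p_k[B_μ] = ∑_{(i,j) ∈ μ} q^{k i'} t^{k j'}` where the cell `c` of the Young diagram
has (0-based) column index `c.2` (the `q`-exponent) and row index `c.1` (the `t`-exponent). -/
def Bexp (μ : YoungDiagram) (k : ℕ+) : K :=
  ∑ c ∈ μ.cells, q ^ ((k : ℕ) * c.2) * t ^ ((k : ℕ) * c.1)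

/-- `n(μ) = ∑ᵢ (i-1) μᵢ`: the sum of the (0-based) row indices of the cells. -/
def nstat (μ : YoungDiagram) : ℕ := ∑ c ∈ μ.cells, c.1

/-- `n(μ') = ∑ᵢ (i-1) μᵢ'`: the sum of the (0-based) column indices of the cells. -/
def nstat' (μ : YoungDiagram) : ℕ := ∑ c ∈ μ.cells, c.2

/-- `h_n` for integer index (zero for negative `n`). -/
def hZ (n : ℤ) : Λ := if n < 0 then 0 else h n.toNat

/-- The Schur function, via the Jacobi–Trudi determinant. -/
def schur (μ : YoungDiagram) : Λ :=
  Matrix.det (Matrix.of fun i j : Fin (μ.colLen 0) =>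
    hZ ((μ.rowLen i : ℤ) + (j : ℤ) - (i : ℤ)))

/-- Dominance order: `lam ⊵ μ`. -/
def Dominates (lam μ : YoungDiagram) : Prop :=
  lam.card = μ.card ∧
    ∀ m : ℕ, ∑ i ∈ Finset.range m, μ.rowLen i ≤ ∑ i ∈ Finset.range m, lam.rowLen i

/-- The span of the Schur functions `s_lam` with `lam ⊵ μ`. -/
def domSpan (μ : YoungDiagram) : Submodule K Λ :=
  Submodule.span K {f | ∃ lam, Dominates lam μ ∧ f = schur lam}

/-- Plethystic twist `F[X] ↦ F[AX]` for an alphabet `A` with `p_k[A] = a k`. -/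
def twist (a : ℕ+ → K) : Λ →ₐ[K] Λ :=
  MvPolynomial.aeval fun k => MvPolynomial.C (a k) * p k

/-- Evaluation at the single-letter alphabet `X = 1` (i.e. `p_k ↦ 1`); for homogeneous `F`
of degree `n` this is the Hall scalar product `⟨F, s_(n)⟩`. -/
def ev1 : Λ →ₐ[K] K := MvPolynomial.aeval fun _ => 1

/-- The modified Macdonald basis `H̃_μ` of `Λ`, axiomatized by the Garsia–Haiman
characterization: `H̃_μ[X(q-1)] ∈ span{s_lam : lam ⊵ μ}`,
`H̃_μ[X(t-1)] ∈ span{s_lam : lam ⊵ μ'}`, and `⟨H̃_μ, s_(n)⟩ = 1`. -/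
structure MacdonaldBasis where
  H : Module.Basis YoungDiagram K Λ
  triangular_q : ∀ μ, twist (fun k => q ^ (k : ℕ) - 1) (H μ) ∈ domSpan μ
  triangular_t : ∀ μ, twist (fun k => t ^ (k : ℕ) - 1) (H μ) ∈ domSpan μ.transpose
  normalized : ∀ μ, ev1 (H μ) = 1

/-- The diagonal operator on `Λ` acting on the Macdonald basis with eigenvalues `ev`. -/
def diag (B : MacdonaldBasis) (ev : YoungDiagram → K) (F : Λ) : Λ :=
  (B.H.repr F).sum fun μ c => (ev μ * c) • B.H μ

/-- The Delta eigenoperator `Δ_f : H̃_μ ↦ f[B_μ] H̃_μ`. -/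
def Delta (B : MacdonaldBasis) (f : Λ) : Λ → Λ :=
  diag B fun μ => MvPolynomial.aeval (Bexp μ) f

/-- `∇ : H̃_μ ↦ (-1)^{|μ|} q^{n(μ')} t^{n(μ)} H̃_μ`. -/
def nabla (B : MacdonaldBasis) : Λ → Λ :=
  diag B fun μ => (-1) ^ μ.card * q ^ nstat' μ * t ^ nstat μ

/-- The inverse of `∇`. -/
def nablaInv (B : MacdonaldBasis) : Λ → Λ :=
  diag B fun μ => ((-1) ^ μ.card * q ^ nstat' μ * t ^ nstat μ)⁻¹

/-- `Π_μ = ∏_{(i,j) ∈ μ/(1)} (1 - q^i t^j)` (product over all cells but the corner). -/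
def PiEv (μ : YoungDiagram) : K :=
  ∏ c ∈ μ.cells.erase (0, 0), (1 - q ^ c.2 * t ^ c.1)

/-- The operator `Π : H̃_μ ↦ Π_μ H̃_μ`. -/
def PiOp (B : MacdonaldBasis) : Λ → Λ := diag B PiEv

/-- The inverse of `Π`. -/
def PiInv (B : MacdonaldBasis) : Λ → Λ := diag B fun μ => (PiEv μ)⁻¹

/-- The Theta operator `Θ_k = Π ∘ (multiplication by e_k[X/M]) ∘ Π⁻¹`. -/
def Theta (B : MacdonaldBasis) (k : ℕ) (F : Λ) : Λ :=
  PiOp B (star (e k) * PiInv B F)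

/-- `Δ_v = ∑_{n ≥ 0} (-v)^n Δ_{e_n}`, the diagonal operator with eigenvalues
`∏_{(i,j) ∈ μ} (1 - v q^i t^j)`. -/
def DeltaV (B : MacdonaldBasis) (v : K) : Λ → Λ :=
  diag B fun μ => ∏ c ∈ μ.cells, (1 - v * q ^ c.2 * t ^ c.1)

/-- The inverse of `Δ_v`. -/
def DeltaVInv (B : MacdonaldBasis) (v : K) : Λ → Λ :=
  diag B fun μ => (∏ c ∈ μ.cells, (1 - v * q ^ c.2 * t ^ c.1))⁻¹

/-- `v ∈ ℚ(q,t)` is a monomial `q^a t^b`. -/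
def IsMonomial (v : K) : Prop := ∃ a b : ℤ, v = q ^ a * t ^ b

/-- `∏_{(i,j) ∈ μ} (1 - q^i t^j u)` as a polynomial in `u`. -/
def cellPoly (μ : YoungDiagram) : Polynomial K :=
  ∏ c ∈ μ.cells, (1 - Polynomial.C (q ^ c.2 * t ^ c.1) * Polynomial.X)


section Aux

open Finset

variable {A B : Type} [CommRing A] [Algebra K A] [CommRing B] [Algebra K B]

def gA (c : ℕ+ → A) : ℕ → A
  | 0 => 1
  | n + 1 =>
      (((n : K) + 1)⁻¹) •
        ∑ k ∈ Finset.range (n + 1), c ⟨k + 1, Nat.succ_pos k⟩ * gA c (n - k)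
  termination_by n => n
  decreasing_by simp_wf <;> omega

lemma gA_zero (c : ℕ+ → A) : gA c 0 = 1 := by rw [gA]

lemma gA_succ (c : ℕ+ → A) (n : ℕ) :
    gA c (n+1) = (((n : K) + 1)⁻¹) •
        ∑ k ∈ Finset.range (n + 1), c ⟨k + 1, Nat.succ_pos k⟩ * gA c (n - k) := by
  rw [gA]

lemma gA_succ_smul (c : ℕ+ → A) (n : ℕ) :
    ((n : K) + 1) • gA c (n+1)
      = ∑ k ∈ Finset.range (n + 1), c ⟨k + 1, Nat.succ_pos k⟩ * gA c (n - k) := by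
  rw [gA_succ, smul_smul, mul_inv_cancel₀ (Nat.cast_add_one_ne_zero n), one_smul]

lemma gA_map (φ : A →ₐ[K] B) (c : ℕ+ → A) (n : ℕ) :
    φ (gA c n) = gA (fun k => φ (c k)) n := by
  induction n using Nat.strong_induction_on with
  | _ n ih =>
    match n with
    | 0 => simp [gA_zero]
    | n + 1 =>
      rw [gA_succ, gA_succ, map_smul, map_sum]
      congr 1
      refine Finset.sum_congr rfl fun k hk => ?_
      rw [map_mul, ih (n - k) (by omega)]

lemma gA_zero_fun (n : ℕ) : gA (fun _ => (0:A)) n = if n = 0 then 1 else 0 := by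
  induction n using Nat.strong_induction_on with
  | _ n ih =>
    match n with
    | 0 => simp [gA_zero]
    | n + 1 => simp [gA_succ]

lemma gA_geom (w : A) (n : ℕ) : gA (fun k => w ^ (k : ℕ)) n = w ^ n := by
  induction n using Nat.strong_induction_on with
  | _ n ih =>
    match n with
    | 0 => simp [gA_zero]
    | n + 1 =>
      refine smul_right_injective A (Nat.cast_add_one_ne_zero (R := K) n) ?_
      show ((n : K) + 1) • gA (fun k => w ^ (k:ℕ)) (n+1) = ((n : K) + 1) • w ^ (n+1)
      rw [gA_succ_smul,
        show ((n:K)+1) = ((n+1 : ℕ) : K) by push_cast; ring, Nat.cast_smul_eq_nsmul]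
      refine Eq.trans (Finset.sum_eq_card_nsmul ?_) (by rw [Finset.card_range])
      intro k hk
      show w ^ (k+1) * gA (fun k => w ^ (k:ℕ)) (n-k) = w ^ (n+1)
      rw [ih (n - k) (by omega), ← pow_add]
      congr 1
      have := Finset.mem_range.mp hk
      omega

lemma sum_triangle {M : Type} [AddCommMonoid M] (f : ℕ → ℕ → M) (n : ℕ) :
    ∑ m ∈ Finset.range (n+1), ∑ k ∈ Finset.range (m+1), f k (m - k)
      = ∑ k ∈ Finset.range (n+1), ∑ i ∈ Finset.range (n - k + 1), f k i := by
  induction n with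
  | zero => simp
  | succ n ih =>
    rw [Finset.sum_range_succ, ih, Finset.sum_range_succ (n := n+1)]
    have h1 : ∑ k ∈ Finset.range (n+1+1), f k (n+1-k)
        = ∑ k ∈ Finset.range (n+1), f k (n+1-k) + f (n+1) 0 := by
      rw [Finset.sum_range_succ]; simp
    have h2 : ∀ k ∈ Finset.range (n+1),
        (∑ i ∈ Finset.range (n+1-k+1), f k i)
          = (∑ i ∈ Finset.range (n-k+1), f k i) + f k (n+1-k) := by
      intro k hk
      have hkn := Finset.mem_range.mp hk
      have : n+1-k+1 = (n-k+1)+1 := by omega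
      rw [this, Finset.sum_range_succ]
      congr 2
      omega
    rw [Finset.sum_range_succ (fun k => ∑ i ∈ Finset.range (n+1-k+1), f k i) (n+1),
      Finset.sum_congr rfl h2, Finset.sum_add_distrib]
    have h3 : n+1-(n+1)+1 = 1 := by omega
    rw [h3, Nat.sub_self]
    simp [add_assoc]

lemma Sconv_comm (c d : ℕ+ → A) (m : ℕ) :
    ∑ k ∈ Finset.range (m+1), gA c k * gA d (m-k)
      = ∑ k ∈ Finset.range (m+1), gA d k * gA c (m-k) := by
  rw [← Finset.sum_range_reflect (fun k => gA d k * gA c (m-k)) (m+1)]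
  refine Finset.sum_congr rfl fun k hk => ?_
  have hk' := Finset.mem_range.mp hk
  rw [show m+1-1-k = m-k from by omega, show m-(m-k) = k from by omega, mul_comm]

set_option maxHeartbeats 1000000 in
lemma gA_half (c d : ℕ+ → A) (n : ℕ) :
    ∑ i ∈ Finset.range (n+2), (((i:ℕ) : K) • gA c i) * gA d (n+1-i)
      = ∑ k ∈ Finset.range (n+1), c ⟨k+1, Nat.succ_pos k⟩ *
          ∑ i ∈ Finset.range (n-k+1), gA c i * gA d (n-k-i) := by
  rw [Finset.sum_range_succ' (fun i => (((i:ℕ):K) • gA c i) * gA d (n+1-i)) (n+1)]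
  simp only [Nat.cast_zero, zero_smul, zero_mul, add_zero]
  calc
    ∑ m ∈ Finset.range (n+1), ((((m+1:ℕ):K) • gA c (m+1)) * gA d (n+1-(m+1)))
        = ∑ m ∈ Finset.range (n+1), ∑ k ∈ Finset.range (m+1),
            (fun k i => c ⟨k+1, Nat.succ_pos k⟩ * (gA c i * gA d (n-k-i))) k (m-k) := by
          refine Finset.sum_congr rfl fun m hm => ?_
          have hm' := Finset.mem_range.mp hm
          rw [show ((m+1:ℕ):K) = ((m:K)+1) from by push_cast; ring, gA_succ_smul,
            Finset.sum_mul]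
          refine Finset.sum_congr rfl fun k hk => ?_
          have hk' := Finset.mem_range.mp hk
          show c ⟨k+1, Nat.succ_pos k⟩ * gA c (m-k) * gA d (n+1-(m+1))
            = c ⟨k+1, Nat.succ_pos k⟩ * (gA c (m-k) * gA d (n-k-(m-k)))
          rw [show n-k-(m-k) = n+1-(m+1) from by omega, mul_assoc]
    _ = ∑ k ∈ Finset.range (n+1), ∑ i ∈ Finset.range (n-k+1),
            (fun k i => c ⟨k+1, Nat.succ_pos k⟩ * (gA c i * gA d (n-k-i))) k i :=
          sum_triangle (fun k i => c ⟨k+1, Nat.succ_pos k⟩ * (gA c i * gA d (n-k-i))) n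
    _ = ∑ k ∈ Finset.range (n+1), c ⟨k+1, Nat.succ_pos k⟩ *
            ∑ i ∈ Finset.range (n-k+1), gA c i * gA d (n-k-i) := by
          refine Finset.sum_congr rfl fun k hk => ?_
          rw [Finset.mul_sum]

lemma gA_conv (c d : ℕ+ → A) (n : ℕ) :
    ∑ k ∈ Finset.range (n+1), gA c k * gA d (n-k)
      = gA (fun k => c k + d k) n := by
  induction n using Nat.strong_induction_on with
  | _ n ih =>
    match n with
    | 0 => simp [gA_zero]
    | n + 1 =>
      refine smul_right_injective A (Nat.cast_add_one_ne_zero (R := K) n) ?_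
      show ((n:K)+1) • ∑ k ∈ Finset.range (n+2), gA c k * gA d (n+1-k)
        = ((n:K)+1) • gA (fun k => c k + d k) (n+1)
      rw [gA_succ_smul, Finset.smul_sum]
      calc
        ∑ i ∈ Finset.range (n+2), ((n:K)+1) • (gA c i * gA d (n+1-i))
            = ∑ i ∈ Finset.range (n+2),
                ((((i:ℕ):K) • gA c i) * gA d (n+1-i)
                  + gA c i * ((((n+1-i:ℕ):K) • gA d (n+1-i)))) := by
              refine Finset.sum_congr rfl fun i hi => ?_
              have hi' := Finset.mem_range.mp hi
              rw [smul_mul_assoc, mul_smul_comm, ← add_smul]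
              congr 1
              rw [← Nat.cast_add, show (i:ℕ) + (n+1-i) = n+1 from by omega]
              push_cast; ring
        _ = (∑ i ∈ Finset.range (n+2), (((i:ℕ):K) • gA c i) * gA d (n+1-i))
              + ∑ i ∈ Finset.range (n+2), gA c i * ((((n+1-i:ℕ):K) • gA d (n+1-i))) :=
            Finset.sum_add_distrib
        _ = (∑ i ∈ Finset.range (n+2), (((i:ℕ):K) • gA c i) * gA d (n+1-i))
              + ∑ i ∈ Finset.range (n+2), (((i:ℕ):K) • gA d i) * gA c (n+1-i) := by
            congr 1
            rw [← Finset.sum_range_reflect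
              (fun i => (((i:ℕ):K) • gA d i) * gA c (n+1-i)) (n+2)]
            refine Finset.sum_congr rfl fun i hi => ?_
            have hi' := Finset.mem_range.mp hi
            rw [show n+2-1-i = n+1-i from by omega, show n+1-(n+1-i) = i from by omega,
              mul_comm]
        _ = (∑ k ∈ Finset.range (n+1), c ⟨k+1, Nat.succ_pos k⟩ *
                ∑ i ∈ Finset.range (n-k+1), gA c i * gA d (n-k-i))
              + ∑ k ∈ Finset.range (n+1), d ⟨k+1, Nat.succ_pos k⟩ *
                ∑ i ∈ Finset.range (n-k+1), gA d i * gA c (n-k-i) := by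
            rw [gA_half c d n, gA_half d c n]
        _ = ∑ k ∈ Finset.range (n+1),
              (fun j : ℕ+ => c j + d j) ⟨k+1, Nat.succ_pos k⟩ *
                gA (fun j : ℕ+ => c j + d j) (n-k) := by
            rw [← Finset.sum_add_distrib]
            refine Finset.sum_congr rfl fun k hk => ?_
            have hk' := Finset.mem_range.mp hk
            show c ⟨k+1, Nat.succ_pos k⟩ * ∑ i ∈ Finset.range (n-k+1), gA c i * gA d (n-k-i)
                + d ⟨k+1, Nat.succ_pos k⟩ * ∑ i ∈ Finset.range (n-k+1), gA d i * gA c (n-k-i)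
              = (c ⟨k+1, Nat.succ_pos k⟩ + d ⟨k+1, Nat.succ_pos k⟩) *
                  gA (fun j : ℕ+ => c j + d j) (n-k)
            rw [← ih (n-k) (by omega), Sconv_comm d c, add_mul]


lemma gA_conv' (c d e : ℕ+ → A) (h : ∀ k, e k = c k + d k) (n : ℕ) :
    gA e n = ∑ k ∈ Finset.range (n+1), gA c k * gA d (n-k) := by
  rw [show e = fun k => c k + d k from funext h]
  exact (gA_conv c d n).symm

lemma genF_eq_gA (c : ℕ+ → Λ) (n : ℕ) : genF c n = gA c n := by
  induction n using Nat.strong_induction_on with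
  | _ n ih =>
    match n with
    | 0 => rw [genF, gA_zero]
    | n + 1 =>
      rw [genF, gA_succ]
      congr 1
      refine Finset.sum_congr rfl fun k hk => ?_
      rw [ih (n - k) (by omega)]

/-- The constant embedding `Λ → LaurentSeries Λ` as a `K`-algebra map. -/
def CL : Λ →ₐ[K] LaurentSeries Λ :=
  { (HahnSeries.C : Λ →+* LaurentSeries Λ) with
    commutes' := fun r => by
      rw [HahnSeries.algebraMap_apply', PowerSeries.algebraMap_apply, HahnSeries.ofPowerSeries_C]
      rfl }

lemma CL_apply (x : Λ) : CL x = HahnSeries.C x := rfl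

lemma pow_X_ne_one (i : Fin 2) (k : ℕ+) :
    (MvPolynomial.X i : MvPolynomial (Fin 2) ℚ) ^ (k : ℕ) ≠ 1 := by
  intro h
  have h2 := congrArg MvPolynomial.constantCoeff h
  rw [map_pow, MvPolynomial.constantCoeff_X, map_one,
    zero_pow (by exact_mod_cast k.pos.ne')] at h2
  exact zero_ne_one h2

lemma Mk_ne_zero (k : ℕ+) : Mk k ≠ 0 := by
  have hh : ∀ i : Fin 2,
      (1 : K) - (algebraMap (MvPolynomial (Fin 2) ℚ) K (MvPolynomial.X i)) ^ (k : ℕ) ≠ 0 := by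
    intro i h
    apply pow_X_ne_one i k
    apply IsFractionRing.injective (MvPolynomial (Fin 2) ℚ) K
    rw [map_pow, map_one]
    have := sub_eq_zero.mp h
    exact this.symm
  exact mul_ne_zero (hh 0) (hh 1)

lemma smul_single' (r : K) (a : ℤ) (x : Λ) :
    r • (HahnSeries.single a x : LaurentSeries Λ)
      = HahnSeries.single a (MvPolynomial.C r * x) := by
  ext g
  rw [HahnSeries.coeff_smul, HahnSeries.coeff_single, HahnSeries.coeff_single]
  split
  · rw [MvPolynomial.smul_eq_C_mul]
  · rw [smul_zero]

lemma TMz_c (k : ℕ+) :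
    TMz (MvPolynomial.C (invM k) * p k)
      = CL (MvPolynomial.C (invM k) * p k) + (HahnSeries.single (-1 : ℤ) (1 : Λ)) ^ (k : ℕ) := by
  have hX : TMz (p k)
      = HahnSeries.C (p k) + Mk k • HahnSeries.single (-((k : ℕ) : ℤ)) (1 : Λ) :=
    MvPolynomial.aeval_X _ k
  have hC : TMz (MvPolynomial.C (invM k)) = HahnSeries.C (MvPolynomial.C (invM k)) := by
    rw [show TMz (MvPolynomial.C (invM k)) = algebraMap K (LaurentSeries Λ) (invM k) from
      MvPolynomial.aeval_C _ _, HahnSeries.algebraMap_apply', PowerSeries.algebraMap_apply,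
      HahnSeries.ofPowerSeries_C]
    rfl
  rw [map_mul, hC, hX, mul_add]
  have h1 : (HahnSeries.C (MvPolynomial.C (invM k)) : LaurentSeries Λ) * HahnSeries.C (p k)
      = CL (MvPolynomial.C (invM k) * p k) := by
    rw [← map_mul]; rfl
  have h2 : (HahnSeries.C (MvPolynomial.C (invM k)) : LaurentSeries Λ) *
        (Mk k • HahnSeries.single (-((k : ℕ) : ℤ)) (1 : Λ))
      = (HahnSeries.single (-1 : ℤ) (1 : Λ)) ^ (k : ℕ) := by
    rw [smul_single', mul_one, HahnSeries.C_apply, HahnSeries.single_mul_single,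
      HahnSeries.single_pow]
    congr 1
    · simp
    · rw [one_pow, ← MvPolynomial.C_mul,
        show invM k * Mk k = 1 from inv_mul_cancel₀ (Mk_ne_zero k), MvPolynomial.C_1]
  rw [h1, h2]

set_option maxHeartbeats 1000000 in
lemma TMz_Eser (n : ℕ) :
    TMz (Eser invM n)
      = ∑ i ∈ Finset.range (n+1),
          HahnSeries.single (-((n - i : ℕ) : ℤ)) (Eser invM i) := by
  have e1 : ∀ m, Eser invM m = gA (fun k => MvPolynomial.C (invM k) * p k) m :=
    fun m => genF_eq_gA _ m
  calc TMz (Eser invM n)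
      = gA (fun k => TMz (MvPolynomial.C (invM k) * p k)) n := by
        rw [e1]; exact gA_map (B := LaurentSeries Λ) TMz _ n
    _ = ∑ i ∈ Finset.range (n+1),
          gA (fun k => CL (MvPolynomial.C (invM k) * p k)) i *
            gA (fun k => (HahnSeries.single (-1 : ℤ) (1 : Λ)) ^ (k : ℕ)) (n-i) :=
        gA_conv' (fun k => CL (MvPolynomial.C (invM k) * p k))
          (fun k => (HahnSeries.single (-1 : ℤ) (1 : Λ)) ^ (k : ℕ))
          (fun k => TMz (MvPolynomial.C (invM k) * p k))
          (fun k => TMz_c k) n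
    _ = ∑ i ∈ Finset.range (n+1),
          HahnSeries.single (-((n - i : ℕ) : ℤ)) (Eser invM i) := by
        refine Finset.sum_congr rfl fun i hi => ?_
        have hc : gA (fun k => CL (MvPolynomial.C (invM k) * p k)) i = CL (Eser invM i) := by
          rw [e1]
          exact (gA_map (B := LaurentSeries Λ) CL _ i).symm
        have hg : gA (fun k => (HahnSeries.single (-1 : ℤ) (1 : Λ)) ^ (k : ℕ)) (n-i)
            = (HahnSeries.single (-1 : ℤ) (1 : Λ)) ^ (n-i) :=
          gA_geom _ (n-i)
        rw [hc, hg, CL_apply, HahnSeries.single_pow, HahnSeries.C_apply,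
          HahnSeries.single_mul_single]
        congr 1
        · simp
        · rw [one_pow, mul_one]

lemma D_shift (r : ℤ) (F : Λ) (n : ℕ) :
    D r (Eser invM n * F)
      = ∑ i ∈ Finset.range (n+1), Eser invM i * D (r + ((n - i : ℕ) : ℤ)) F := by
  show ((TMz (Eser invM n * F)) * EnegL).coeff r = _
  rw [map_mul, TMz_Eser, Finset.sum_mul, Finset.sum_mul]
  rw [show (∑ i ∈ Finset.range (n+1),
      HahnSeries.single (-((n - i : ℕ) : ℤ)) (Eser invM i) * TMz F * EnegL).coeff r
    = ∑ i ∈ Finset.range (n+1),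
        (HahnSeries.single (-((n - i : ℕ) : ℤ)) (Eser invM i) * TMz F * EnegL).coeff r from
    map_sum (HahnSeries.coeff.addMonoidHom r) _ _]
  refine Finset.sum_congr rfl fun i hi => ?_
  rw [mul_assoc]
  conv_lhs => rw [show r = (r + ((n - i : ℕ) : ℤ)) + (-((n - i : ℕ) : ℤ)) from by ring]
  exact HahnSeries.coeff_single_mul_add

lemma EE_one :
    (PowerSeries.mk fun n => Eser (fun j => -invM j) n)
        * (PowerSeries.mk fun n => Eser invM n) = 1 := by
  refine PowerSeries.ext fun n => ?_
  rw [PowerSeries.coeff_mul, Finset.Nat.sum_antidiagonal_eq_sum_range_succ_mk,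
    PowerSeries.coeff_one]
  simp only [PowerSeries.coeff_mk]
  calc ∑ i ∈ Finset.range (n+1), Eser (fun j => -invM j) i * Eser invM (n-i)
      = ∑ i ∈ Finset.range (n+1),
          gA (fun k => MvPolynomial.C (-invM k) * p k) i *
            gA (fun k => MvPolynomial.C (invM k) * p k) (n-i) :=
        Finset.sum_congr rfl fun i _ => by
          rw [show Eser (fun j => -invM j) i
              = gA (fun k => MvPolynomial.C (-invM k) * p k) i from genF_eq_gA _ i,
            show Eser invM (n-i)
              = gA (fun k => MvPolynomial.C (invM k) * p k) (n-i) from genF_eq_gA _ (n-i)]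
    _ = gA (fun k => MvPolynomial.C (-invM k) * p k + MvPolynomial.C (invM k) * p k) n :=
        gA_conv _ _ n
    _ = gA (fun _ => (0 : Λ)) n := by
        congr 1
        funext k
        rw [← add_mul, ← MvPolynomial.C_add, neg_add_cancel, MvPolynomial.C_0, zero_mul]
    _ = if n = 0 then 1 else 0 := gA_zero_fun n

end Aux

/-- `P_{-z/M} ∘ D_r ∘ P_{z/M} = ∑_{k ≥ 0} z^k D_{k+r}`. -/
theorem D_conjugation (r : ℤ) (F : Λ) :
    (PowerSeries.mk fun n => Eser (fun j => -invM j) n)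
        * (PowerSeries.mk fun n => D r (Eser invM n * F))
      = PowerSeries.mk fun k => D ((k : ℤ) + r) F := by
  have h2 : (PowerSeries.mk fun n => D r (Eser invM n * F))
      = (PowerSeries.mk fun n => Eser invM n)
          * (PowerSeries.mk fun j => D (r + (j : ℤ)) F) := by
    refine PowerSeries.ext fun n => ?_
    rw [PowerSeries.coeff_mul, Finset.Nat.sum_antidiagonal_eq_sum_range_succ_mk]
    simp only [PowerSeries.coeff_mk]
    exact D_shift r F n
  rw [h2, ← mul_assoc, EE_one, one_mul]
  refine PowerSeries.ext fun k => ?_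
  simp only [PowerSeries.coeff_mk]
  rw [add_comm r ((k : ℕ) : ℤ)]

end ThetaOperators
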